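/- Let G be a torsion-free group in which every abelian subgroup is finitely generated, and suppose every nonidentity element of the center Z(G) is commensurable with a fixed element Δ ∈ G. Then Z(G) is cyclic. -/

import Mathlib

theorem stmt_3 {G : Type*} [Group G] (htf : ∀ g : G, g ≠ 1 → ¬IsOfFinOrder g)
    (hfg : ∀ H : Subgroup G, (∀ a ∈ H, ∀ b ∈ H, a * b = b * a) → H.FG)
    (Δ : G)
    (hcom : ∀ g ∈ Subgroup.center G, g ≠ 1 →
      ∃ a b : ℤ, a ≠ 0 ∧ b ≠ 0 ∧ IsConj (g ^ a) (Δ ^ b)) :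
    IsCyclic (Subgroup.center G) := by
  set Z := Subgroup.center G with hZ
  -- Key: any two nontrivial central elements have equal nonzero powers
  have key : ∀ x y : Z, x ≠ 1 → y ≠ 1 → ∃ m n : ℤ, m ≠ 0 ∧ n ≠ 0 ∧ x ^ m = y ^ n := by
    intro x y hx hy
    obtain ⟨a, b, ha, hb, hab⟩ := hcom (x : G) x.2
      (fun h => hx (OneMemClass.coe_eq_one.mp h))
    obtain ⟨c, d, hc, hd, hcd⟩ := hcom (y : G) y.2
      (fun h => hy (OneMemClass.coe_eq_one.mp h))
    obtain ⟨u, hu⟩ := isConj_iff.1 hab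
    obtain ⟨v, hv⟩ := isConj_iff.1 hcd
    refine ⟨a * d, c * b, mul_ne_zero ha hd, mul_ne_zero hc hb, ?_⟩
    have hxc : ∀ g : G, g * (x : G) ^ (a * d) * g⁻¹ = (x : G) ^ (a * d) := by
      intro g
      have := Subgroup.mem_center_iff.1 (x ^ (a * d) : Z).2 g
      push_cast at this ⊢
      rw [this, mul_assoc, mul_inv_cancel, mul_one]
    have hyc : ∀ g : G, g * (y : G) ^ (c * b) * g⁻¹ = (y : G) ^ (c * b) := by
      intro g
      have := Subgroup.mem_center_iff.1 (y ^ (c * b) : Z).2 g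
      push_cast at this ⊢
      rw [this, mul_assoc, mul_inv_cancel, mul_one]
    have h1 : (x : G) ^ (a * d) = Δ ^ (b * d) := by
      rw [← hxc u, zpow_mul, zpow_mul, ← hu, conj_zpow]
    have h2 : (y : G) ^ (c * b) = Δ ^ (d * b) := by
      rw [← hyc v, zpow_mul, zpow_mul, ← hv, conj_zpow]
    have : (x : G) ^ (a * d) = (y : G) ^ (c * b) := by
      rw [h1, h2, mul_comm b d]
    exact Subtype.ext (by push_cast; exact this)
  -- Set up the additive module structure
  haveI : Group.FG Z := (Group.fg_iff_subgroup_fg Z).2 <| hfg Z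
    (fun a ha b hb => Subgroup.mem_center_iff.1 hb a)
  letI : CommGroup Z := { (inferInstance : Group Z) with
    mul_comm := fun a b => Subtype.ext (Subgroup.mem_center_iff.1 b.2 a) }
  haveI : Module.Finite ℤ (Additive Z) :=
    Module.Finite.iff_addGroup_fg.2 (GroupFG.iff_add_fg.1 ‹_›)
  have htfZ : ∀ g : Z, g ≠ 1 → ¬IsOfFinOrder g := fun g hg hfin =>
    htf g (fun h => hg (Subtype.ext h)) ((Submonoid.isOfFinOrder_coe (H := Z.toSubmonoid) (x := g)).mpr hfin)
  haveI : NoZeroSMulDivisors ℤ (Additive Z) := by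
    refine @IsAddTorsionFree.to_noZeroSMulDivisors_int (Additive Z) _
      (isAddTorsionFree_iff_not_isOfFinAddOrder.2 ?_)
    intro g hg hfin
    exact htfZ (Additive.toMul g) (by simpa using hg)
      (isOfFinAddOrder_ofMul_iff.mp (by simpa using hfin))
  let b := Module.Free.chooseBasis ℤ (Additive Z)
  haveI hsub : Subsingleton (Module.Free.ChooseBasisIndex ℤ (Additive Z)) := by
    by_contra h
    rw [not_subsingleton_iff_nontrivial] at h
    obtain ⟨i, j, hij⟩ := h.exists_pair_ne
    have hi : Additive.toMul (b i) ≠ (1 : Z) := by simpa using b.ne_zero i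
    have hj : Additive.toMul (b j) ≠ (1 : Z) := by simpa using b.ne_zero j
    obtain ⟨m, n, hm, hn, hmn⟩ := key _ _ hi hj
    have hsm : m • b i = n • b j := Additive.toMul.injective (by
      simpa using hmn)
    have := congrArg (fun z => b.repr z i) hsm
    simp only [map_zsmul, Module.Basis.repr_self, Finsupp.smul_apply, smul_eq_mul] at this
    rw [Finsupp.single_eq_same, Finsupp.single_eq_of_ne' (Ne.symm hij)] at this
    simp only [mul_one, mul_zero] at this
    exact hm this
  rw [← isAddCyclic_additive_iff]
  rcases isEmpty_or_nonempty (Module.Free.ChooseBasisIndex ℤ (Additive Z)) with h | h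
  · haveI : Subsingleton (Additive Z) := b.repr.toEquiv.subsingleton
    exact ⟨0, fun x => ⟨0, Subsingleton.elim _ _⟩⟩
  · haveI : Unique (Module.Free.ChooseBasisIndex ℤ (Additive Z)) := uniqueOfSubsingleton h.some
    refine ⟨b default, fun x => ⟨b.repr x default, ?_⟩⟩
    have := b.sum_repr x
    rw [Fintype.sum_unique] at this
    simpa using this
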